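/- Fix constants M > 1, K > 0 and β ∈ (0,1). There exist c > 0 and l₀ ∈ ℕ (depending only on M, K and β) such that for every l ≥ l₀, every Jacobi matrix H on {1,…,l} as in the context, and every normalized eigenvector u of H, there exists n₀ ∈ {1,…,l} such that for every m ∈ {1,…,l−1} with |m − n₀| ≤ c·l^β one has max(|u(m)|, |u(m+1)|) ≥ e^{−l^β}. -/

import Mathlib

/-- Jacobi matrix on `ℓ²({1,…,L})` with Dirichlet boundary conditions:
`(Hu)(n) = a(n+1)u(n+1) + a(n)u(n-1) + V(n)u(n)`, site `n = i.val + 1`. -/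
noncomputable def jacobiMatrix (L : ℕ) (a V : ℕ → ℝ) : Matrix (Fin L) (Fin L) ℝ :=
  fun i j =>
    if i.val + 1 = j.val then a (j.val + 1)
    else if j.val + 1 = i.val then a (i.val + 1)
    else if i = j then V (i.val + 1) else 0

/-- Extension of `u : Fin L → ℝ` to `ℕ` by `0`; site `n ∈ {1,…,L}` is `u ⟨n-1⟩`. -/
def extV (L : ℕ) (u : Fin L → ℝ) (n : ℕ) : ℝ :=
  if h : 1 ≤ n ∧ n ≤ L then u ⟨n - 1, by omega⟩ else 0

lemma extV_eq (l : ℕ) (u : Fin l → ℝ) (n : ℕ) (h1 : 1 ≤ n) (h2 : n ≤ l) :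
    extV l u n = u ⟨n - 1, by omega⟩ := dif_pos ⟨h1, h2⟩

lemma extV_zero (l : ℕ) (u : Fin l → ℝ) (n : ℕ) (h : n = 0 ∨ l < n) :
    extV l u n = 0 := dif_neg (by omega)

lemma jacobi_rec (l : ℕ) (a V : ℕ → ℝ) (u : Fin l → ℝ) (E : ℝ)
    (h : (jacobiMatrix l a V).mulVec u = E • u) (n : ℕ) (h1 : 1 ≤ n) (h2 : n ≤ l) :
    E * extV l u n
      = a (n+1) * extV l u (n+1) + a n * extV l u (n-1) + V n * extV l u n := by
  have hil : n - 1 < l := by omega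
  set i : Fin l := ⟨n - 1, hil⟩ with hidef
  have hival : i.val = n - 1 := rfl
  have h' := congrFun h i
  simp only [Matrix.mulVec, dotProduct, Pi.smul_apply, smul_eq_mul] at h'
  set G : ℕ → ℝ := fun k =>
    (if i.val + 1 = k then a (k+1) * extV l u (k+1) else 0)
    + (if i.val - 1 = k then (if i.val = 0 then 0 else a (i.val+1) * extV l u (k+1)) else 0)
    + (if i.val = k then V (i.val+1) * extV l u (k+1) else 0) with hG
  have hstep : ∀ j : Fin l, jacobiMatrix l a V i j * u j = G j.val := by
    intro j
    have hu : u j = extV l u (j.val + 1) := by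
      rw [extV_eq l u (j.val+1) (by omega) (by omega)]; simp
    rw [hG]
    simp only [jacobiMatrix, Fin.ext_iff, hu]
    have hjl := j.isLt
    split_ifs <;> first | ring1 | (exfalso; omega)
  have hsum : ∑ j : Fin l, jacobiMatrix l a V i j * u j = ∑ k ∈ Finset.range l, G k := by
    rw [Finset.sum_congr rfl (fun j _ => hstep j)]
    exact Fin.sum_univ_eq_sum_range G l
  rw [hsum, hG] at h'
  simp only [Finset.sum_add_distrib, Finset.sum_ite_eq] at h'
  rw [extV_eq l u n h1 h2]
  rw [show E * u ⟨n-1, by omega⟩ = E * u i from rfl]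
  rw [← h']
  have e1 : i.val + 1 = n := by omega
  -- three terms
  have T1 : (if i.val + 1 ∈ Finset.range l then a (i.val+1+1) * extV l u (i.val+1+1) else 0)
      = a (n+1) * extV l u (n+1) := by
    rw [e1]
    by_cases hc : n ∈ Finset.range l
    · rw [if_pos hc]
    · rw [if_neg hc, extV_zero l u (n+1) (Or.inr (by simp [Finset.mem_range] at hc; omega)),
        mul_zero]
  have T2 : (if i.val - 1 ∈ Finset.range l then
        (if i.val = 0 then 0 else a (i.val+1) * extV l u (i.val-1+1)) else 0)
      = a n * extV l u (n-1) := by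
    have hmem : i.val - 1 ∈ Finset.range l := Finset.mem_range.2 (by omega)
    rw [if_pos hmem]
    by_cases h0 : i.val = 0
    · rw [if_pos h0, show n - 1 = 0 by omega, extV_zero l u 0 (Or.inl rfl), mul_zero]
    · rw [if_neg h0, e1, show i.val - 1 + 1 = n - 1 by omega]
  have T3 : (if i.val ∈ Finset.range l then V (i.val+1) * extV l u (i.val+1) else 0)
      = V n * extV l u n := by
    rw [if_pos (Finset.mem_range.2 (by omega)), e1]
  rw [T1, T2, T3]
  rw [extV_eq l u n h1 h2]
lemma bound_aux (M K x y z aa : ℝ) (hM : 1 < M) (hK : 0 < K)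
    (h1 : 1/M ≤ |aa|) (hA : |aa*x| ≤ (2*M+2*K)*|y| + M*|z|) :
    |x| ≤ (M*(3*M+2*K)) * max |y| |z| := by
  have hy : |y| ≤ max |y| |z| := le_max_left _ _
  have hz : |z| ≤ max |y| |z| := le_max_right _ _
  have hm0 : (0:ℝ) ≤ max |y| |z| := le_trans (abs_nonneg y) hy
  have hM0 : (0:ℝ) < M := by linarith
  have h2 : |aa| * |x| ≤ (3*M+2*K) * max |y| |z| := by
    rw [← abs_mul]; nlinarith
  have h3 : (1/M) * |x| ≤ (3*M+2*K) * max |y| |z| :=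
    le_trans (mul_le_mul_of_nonneg_right h1 (abs_nonneg x)) h2
  have h4 := mul_le_mul_of_nonneg_left h3 hM0.le
  calc |x| = M * ((1/M) * |x|) := by field_simp
    _ ≤ M * ((3*M+2*K) * max |y| |z|) := h4
    _ = (M*(3*M+2*K)) * max |y| |z| := by ring

/-- Lemma `lem-large`.  A normalized eigenvector of a Jacobi matrix has a
site `n₀` around which, in a window of radius `c·l^β`, at each `m` either `|u(m)|` or
`|u(m+1)|` is at least `e^{-l^β}`. -/
theorem stmt5 (M K : ℝ) (hM : 1 < M) (hK : 0 < K) (β : ℝ) (hβ0 : 0 < β) (hβ1 : β < 1) :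
    ∃ c : ℝ, 0 < c ∧ ∃ l₀ : ℕ, ∀ l : ℕ, l₀ ≤ l →
      ∀ (a V : ℕ → ℝ),
        (∀ n, 1 ≤ n → n ≤ l + 1 → 1 / M ≤ |a n| ∧ |a n| ≤ M) →
        (∀ n, 1 ≤ n → n ≤ l → |V n| ≤ K) →
        ∀ (u : Fin l → ℝ) (E : ℝ),
          (jacobiMatrix l a V).mulVec u = E • u → (∑ i, u i ^ 2) = 1 →
          ∃ n₀ : ℕ, 1 ≤ n₀ ∧ n₀ ≤ l ∧
            ∀ m : ℕ, 1 ≤ m → m ≤ l - 1 → |(m : ℝ) - (n₀ : ℝ)| ≤ c * (l : ℝ) ^ β →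
              Real.exp (-(l : ℝ) ^ β) ≤ max |extV l u m| |extV l u (m + 1)| := by
  have hM0 : (0:ℝ) < M := by linarith
  set C : ℝ := M * (3*M + 2*K) with hCdef
  have hC1 : 1 < C := by nlinarith
  have hC0 : (0:ℝ) < C := by linarith
  have hlogC : 0 < Real.log C := Real.log_pos hC1
  set c : ℝ := 1 / (2 * Real.log C) with hcdef
  have hc0 : 0 < c := by positivity
  refine ⟨c, hc0, ?_⟩
  have hev : ∀ᶠ x : ℝ in Filter.atTop, Real.log C + Real.log x / 2 ≤ x ^ β / 2 := by
    have h1 := (isLittleO_log_rpow_atTop hβ0).def (by norm_num : (0:ℝ) < 1/8)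
    have h2 := (tendsto_rpow_atTop hβ0).eventually_ge_atTop (4 * Real.log C)
    filter_upwards [h1, h2, Filter.eventually_ge_atTop (1:ℝ)] with x hx1 hx2 hx3
    have hxb : 0 ≤ x ^ β := Real.rpow_nonneg (by linarith) β
    rw [Real.norm_eq_abs, Real.norm_eq_abs, abs_of_nonneg hxb] at hx1
    have hlx : Real.log x ≤ (1/8) * x ^ β := le_trans (le_abs_self _) hx1
    linarith
  obtain ⟨l₀, hl₀⟩ := Filter.eventually_atTop.1
    (((tendsto_natCast_atTop_atTop (R := ℝ)).eventually hev).and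
      (Filter.eventually_ge_atTop 1))
  refine ⟨l₀, ?_⟩
  intro l hl a V ha hV u E heig hnorm
  obtain ⟨hlog, hl1⟩ := hl₀ l hl
  have hlpos : (0:ℝ) < l := by exact_mod_cast hl1
  have hsl : 0 < Real.sqrt l := Real.sqrt_pos.2 hlpos
  obtain ⟨i₀, -, hi₀⟩ := Finset.exists_max_image (Finset.univ : Finset (Fin l))
      (fun i => |u i|) ⟨⟨0, by omega⟩, Finset.mem_univ _⟩
  have hmax : ∀ j, |u j| ≤ |u i₀| := fun j => hi₀ j (Finset.mem_univ _)
  have hext_le : ∀ k, |extV l u k| ≤ |u i₀| := by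
    intro k
    unfold extV
    split
    · exact hmax _
    · simpa using abs_nonneg (u i₀)
  have hi₀l := i₀.isLt
  have hlb : 1 / Real.sqrt l ≤ |u i₀| := by
    have h1 : (1:ℝ) ≤ l * u i₀ ^ 2 := by
      have h0 : (1:ℝ) = ∑ i, u i ^ 2 := hnorm.symm
      rw [h0]
      calc ∑ i, u i ^ 2 ≤ ∑ _i : Fin l, u i₀ ^ 2 := by
            apply Finset.sum_le_sum
            intro i _
            have h := hmax i
            calc u i ^ 2 = |u i|^2 := (sq_abs _).symm
              _ ≤ |u i₀|^2 := by nlinarith [abs_nonneg (u i)]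
              _ = u i₀ ^ 2 := sq_abs _
        _ = l * u i₀ ^ 2 := by
            rw [Finset.sum_const, Finset.card_univ, Fintype.card_fin, nsmul_eq_mul]
    have h2 : 1 / (l:ℝ) ≤ u i₀ ^ 2 := (div_le_iff₀ hlpos).2 (by rw [mul_comm]; exact h1)
    calc 1 / Real.sqrt l = Real.sqrt (1 / l) := by
          rw [one_div, one_div, Real.sqrt_inv]
      _ ≤ Real.sqrt (u i₀ ^ 2) := Real.sqrt_le_sqrt h2
      _ = |u i₀| := Real.sqrt_sq_eq_abs _
  have hu0 : 0 < |u i₀| := lt_of_lt_of_le (by positivity) hlb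
  have hrec : ∀ n, 1 ≤ n → n ≤ l → E * extV l u n
      = a (n+1) * extV l u (n+1) + a n * extV l u (n-1) + V n * extV l u n :=
    fun n hn1 hn2 => jacobi_rec l a V u E heig n hn1 hn2
  have hn₀eq : extV l u (i₀.val + 1) = u i₀ := by
    rw [extV_eq l u (i₀.val+1) (by omega) (by omega)]
    simp
  have hE : |E| ≤ 2*M + K := by
    have h0 := hrec (i₀.val+1) (by omega) (by omega)
    have t1 : |a (i₀.val+1+1) * extV l u (i₀.val+1+1)| ≤ M * |u i₀| := by
      rw [abs_mul]
      exact mul_le_mul (ha _ (by omega) (by omega)).2 (hext_le _) (abs_nonneg _) hM0.le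
    have t2 : |a (i₀.val+1) * extV l u (i₀.val+1-1)| ≤ M * |u i₀| := by
      rw [abs_mul]
      exact mul_le_mul (ha _ (by omega) (by omega)).2 (hext_le _) (abs_nonneg _) hM0.le
    have t3 : |V (i₀.val+1) * extV l u (i₀.val+1)| ≤ K * |u i₀| := by
      rw [abs_mul]
      exact mul_le_mul (hV _ (by omega) (by omega)) (hext_le _) (abs_nonneg _) hK.le
    have habsadd := abs_add_le (a (i₀.val+1+1) * extV l u (i₀.val+1+1))
      (a (i₀.val+1) * extV l u (i₀.val+1-1))
    have hchain : |E| * |u i₀| ≤ (2*M+K) * |u i₀| := by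
      calc |E| * |u i₀| = |E * extV l u (i₀.val+1)| := by rw [hn₀eq, abs_mul]
        _ = |a (i₀.val+1+1) * extV l u (i₀.val+1+1) + a (i₀.val+1) * extV l u (i₀.val+1-1)
            + V (i₀.val+1) * extV l u (i₀.val+1)| := by rw [h0]
        _ ≤ |a (i₀.val+1+1) * extV l u (i₀.val+1+1) + a (i₀.val+1) * extV l u (i₀.val+1-1)|
            + |V (i₀.val+1) * extV l u (i₀.val+1)| := abs_add_le _ _
        _ ≤ |a (i₀.val+1+1) * extV l u (i₀.val+1+1)| + |a (i₀.val+1) * extV l u (i₀.val+1-1)|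
            + |V (i₀.val+1) * extV l u (i₀.val+1)| := by linarith
        _ ≤ M * |u i₀| + M * |u i₀| + K * |u i₀| := by linarith
        _ = (2*M+K) * |u i₀| := by ring
    exact le_of_mul_le_mul_right hchain hu0
  set R : ℕ → ℝ := fun k => max |extV l u k| |extV l u (k-1)| with hRdef
  have hR0 : ∀ k, 0 ≤ R k := fun k => le_trans (abs_nonneg _) (le_max_left _ _)
  have habs_sub : ∀ p q : ℝ, |p - q| ≤ |p| + |q| := by
    intro p q
    calc |p - q| = |p + -q| := by rw [sub_eq_add_neg]
      _ ≤ |p| + |-q| := abs_add_le _ _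
      _ = |p| + |q| := by rw [abs_neg]
  have hEV : ∀ nn, 1 ≤ nn → nn ≤ l → |E - V nn| ≤ 2*M + 2*K := by
    intro nn h1 h2
    have := hV nn h1 h2
    linarith [habs_sub E (V nn)]
  have step2 : ∀ nn, 1 ≤ nn → nn ≤ l → R (nn+1) ≤ C * R nn := by
    intro nn h1 h2
    have hrc := hrec nn h1 h2
    have heq : a (nn+1) * extV l u (nn+1)
        = (E - V nn) * extV l u nn - a nn * extV l u (nn-1) := by linear_combination -hrc
    have habs : |a (nn+1) * extV l u (nn+1)|
        ≤ (2*M+2*K)*|extV l u nn| + M*|extV l u (nn-1)| := by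
      rw [heq]
      calc |(E - V nn) * extV l u nn - a nn * extV l u (nn-1)|
          ≤ |(E - V nn) * extV l u nn| + |a nn * extV l u (nn-1)| := habs_sub _ _
        _ ≤ (2*M+2*K)*|extV l u nn| + M*|extV l u (nn-1)| := by
            rw [abs_mul, abs_mul]
            gcongr
            · exact hEV nn h1 h2
            · exact (ha nn (by omega) (by omega)).2
    have hb := bound_aux M K (extV l u (nn+1)) (extV l u nn) (extV l u (nn-1)) (a (nn+1))
      hM hK (ha (nn+1) (by omega) (by omega)).1 habs
    have hrw : R (nn+1) = max |extV l u (nn+1)| |extV l u nn| := by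
      simp only [hRdef, Nat.add_sub_cancel]
    rw [hrw]
    apply max_le
    · exact le_trans hb (le_of_eq rfl)
    · calc |extV l u nn| ≤ R nn := le_max_left _ _
        _ ≤ C * R nn := le_mul_of_one_le_left (hR0 nn) hC1.le
  have step1 : ∀ nn, 1 ≤ nn → nn ≤ l → R nn ≤ C * R (nn+1) := by
    intro nn h1 h2
    have hrc := hrec nn h1 h2
    have heq : a nn * extV l u (nn-1)
        = (E - V nn) * extV l u nn - a (nn+1) * extV l u (nn+1) := by linear_combination -hrc
    have habs : |a nn * extV l u (nn-1)|
        ≤ (2*M+2*K)*|extV l u nn| + M*|extV l u (nn+1)| := by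
      rw [heq]
      calc |(E - V nn) * extV l u nn - a (nn+1) * extV l u (nn+1)|
          ≤ |(E - V nn) * extV l u nn| + |a (nn+1) * extV l u (nn+1)| := habs_sub _ _
        _ ≤ (2*M+2*K)*|extV l u nn| + M*|extV l u (nn+1)| := by
            rw [abs_mul, abs_mul]
            gcongr
            · exact hEV nn h1 h2
            · exact (ha (nn+1) (by omega) (by omega)).2
    have hb := bound_aux M K (extV l u (nn-1)) (extV l u nn) (extV l u (nn+1)) (a nn)
      hM hK (ha nn (by omega) (by omega)).1 habs
    have hrw : R (nn+1) = max |extV l u (nn+1)| |extV l u nn| := by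
      simp only [hRdef, Nat.add_sub_cancel]
    rw [hrw]
    apply max_le
    · calc |extV l u nn| ≤ max |extV l u nn| |extV l u (nn+1)| := le_max_left _ _
        _ ≤ C * max |extV l u nn| |extV l u (nn+1)| := le_mul_of_one_le_left
            (le_trans (abs_nonneg _) (le_max_left _ _)) hC1.le
        _ = C * max |extV l u (nn+1)| |extV l u nn| := by rw [max_comm]
    · calc |extV l u (nn-1)| ≤ C * max |extV l u nn| |extV l u (nn+1)| := hb
        _ = C * max |extV l u (nn+1)| |extV l u nn| := by rw [max_comm]
  have chainA : ∀ k n, 1 ≤ n → n + k ≤ l + 1 → R n ≤ C^k * R (n+k) := by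
    intro k
    induction k with
    | zero => intro n h1 h2; simp
    | succ k ih =>
      intro n h1 h2
      calc R n ≤ C^k * R (n+k) := ih n h1 (by omega)
        _ ≤ C^k * (C * R (n+k+1)) := by
            apply mul_le_mul_of_nonneg_left (step1 (n+k) (by omega) (by omega))
              (pow_nonneg hC0.le k)
        _ = C^(k+1) * R (n+(k+1)) := by rw [show n+(k+1) = n+k+1 by omega]; ring
  have chainB : ∀ k n, 1 ≤ n → n + k ≤ l + 1 → R (n+k) ≤ C^k * R n := by
    intro k
    induction k with
    | zero => intro n h1 h2; simp
    | succ k ih =>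
      intro n h1 h2
      calc R (n+(k+1)) = R (n+k+1) := by rw [show n+(k+1) = n+k+1 by omega]
        _ ≤ C * R (n+k) := step2 (n+k) (by omega) (by omega)
        _ ≤ C * (C^k * R n) := by
            apply mul_le_mul_of_nonneg_left (ih n h1 (by omega)) hC0.le
        _ = C^(k+1) * R n := by ring
  refine ⟨i₀.val+1, by omega, by omega, ?_⟩
  intro m hm1 hm2 hmd
  have hml : m + 1 ≤ l := by omega
  have hRn₀ : 1 / Real.sqrt l ≤ R (i₀.val+1) := by
    calc 1 / Real.sqrt l ≤ |u i₀| := hlb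
      _ = |extV l u (i₀.val+1)| := by rw [hn₀eq]
      _ ≤ R (i₀.val+1) := le_max_left _ _
  obtain ⟨k, hk1, hk2⟩ : ∃ k : ℕ, R (i₀.val+1) ≤ C^k * R (m+1)
      ∧ (k:ℝ) ≤ |(m:ℝ) - ((i₀.val+1 : ℕ):ℝ)| + 1 := by
    rcases le_or_gt (i₀.val+1) (m+1) with hcase | hcase
    · refine ⟨m+1-(i₀.val+1), ?_, ?_⟩
      · have h5 := chainA (m+1-(i₀.val+1)) (i₀.val+1) (by omega) (by omega)
        rwa [show (i₀.val+1) + (m+1-(i₀.val+1)) = m+1 by omega] at h5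
      · rw [Nat.cast_sub hcase]
        push_cast
        have := le_abs_self ((m:ℝ) - ((i₀.val:ℝ)+1))
        linarith
    · refine ⟨(i₀.val+1)-(m+1), ?_, ?_⟩
      · have h5 := chainB ((i₀.val+1)-(m+1)) (m+1) (by omega) (by omega)
        rwa [show (m+1) + ((i₀.val+1)-(m+1)) = i₀.val+1 by omega] at h5
      · rw [Nat.cast_sub (by omega)]
        push_cast
        have := neg_le_abs ((m:ℝ) - ((i₀.val:ℝ)+1))
        linarith
  have hkc : (k:ℝ) ≤ c * (l:ℝ)^β + 1 := by
    have : |(m:ℝ) - ((i₀.val+1 : ℕ):ℝ)| ≤ c * (l:ℝ)^β := by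
      convert hmd using 3
    linarith
  have hne : Real.log C ≠ 0 := ne_of_gt hlogC
  have hexp : (c * (l:ℝ)^β + 1) * Real.log C = (l:ℝ)^β/2 + Real.log C := by
    rw [hcdef]; field_simp
  have hklog : (k:ℝ) * Real.log C ≤ (l:ℝ)^β/2 + Real.log C := by
    rw [← hexp]
    exact mul_le_mul_of_nonneg_right hkc hlogC.le
  have hCk0 : (0:ℝ) < C^k := pow_pos hC0 k
  have hpos : 0 < Real.sqrt l * C^k := mul_pos hsl hCk0
  have hkey : Real.sqrt l * C^k ≤ Real.exp ((l:ℝ)^β) := by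
    rw [← Real.exp_log hpos]
    apply Real.exp_le_exp.2
    rw [Real.log_mul (ne_of_gt hsl) (ne_of_gt hCk0), Real.log_pow,
      Real.log_sqrt hlpos.le]
    linarith
  have h6 : 1 / Real.sqrt l ≤ C^k * R (m+1) := le_trans hRn₀ hk1
  have h7 : 1 ≤ Real.sqrt l * (C^k * R (m+1)) := by
    have h := mul_le_mul_of_nonneg_left h6 hsl.le
    rwa [mul_one_div, div_self (ne_of_gt hsl)] at h
  have hgoal : max |extV l u m| |extV l u (m + 1)| = R (m+1) := by
    simp only [hRdef, Nat.add_sub_cancel]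
    rw [max_comm]
  rw [hgoal]
  calc Real.exp (-(l:ℝ)^β) = (Real.exp ((l:ℝ)^β))⁻¹ := Real.exp_neg _
    _ ≤ (Real.sqrt l * C^k)⁻¹ := inv_anti₀ hpos hkey
    _ ≤ R (m+1) := by
        rw [inv_eq_one_div, div_le_iff₀ hpos]
        nlinarith [h7]
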